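/- Let u be an arithmetic sequence, I a proper free ideal of ℕ, and x ∈ [0,1). If the support S = {n ≥ 1 : c_n ≠ 0} of x belongs to I and S is I-translation invariant, then u_n x (mod 1) I-converges to 0 in ℝ/ℤ, i.e., for every ε > 0 the set {n : ‖u_n x‖ ≥ ε} belongs to I, where ‖·‖ is the distance to the nearest integer. -/

import Mathlib

theorem stmt_7 (u b c : ℕ → ℕ) (x : ℝ)
    (hu0 : u 0 = 1) (humono : StrictMono u)
    (hb : ∀ n, u (n + 1) = b (n + 1) * u n)
    (hx0 : 0 ≤ x) (hx1 : x < 1)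
    (hc0 : c 0 = 0)
    (hsum : x = ∑' n : ℕ, (c (n + 1) : ℝ) / (u (n + 1) : ℝ))
    (hclt : ∀ n, c (n + 1) < b (n + 1))
    (hcinf : {n : ℕ | c (n + 1) + 1 < b (n + 1)}.Infinite)
    (I : Set (Set ℕ))
    (hne : I.Nonempty)
    (hunion : ∀ A B : Set ℕ, A ∈ I → B ∈ I → A ∪ B ∈ I)
    (hsubset : ∀ A B : Set ℕ, A ⊆ B → B ∈ I → A ∈ I)
    (hfree : ∀ A : Set ℕ, A.Finite → A ∈ I)
    (hproper : Set.univ ∉ I)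
    (hS : {n : ℕ | c n ≠ 0} ∈ I)
    (hSti : ∀ z : ℤ, {m : ℕ | ∃ a : ℕ, c a ≠ 0 ∧ (a : ℤ) + z = (m : ℤ)} ∈ I) :
    ∀ ε : ℝ, 0 < ε →
      {n : ℕ | ε ≤ |(u n : ℝ) * x - (round ((u n : ℝ) * x) : ℝ)|} ∈ I := by
  -- basic positivity facts
  have hupos : ∀ n, 0 < u n := by
    intro n
    have := humono.monotone (Nat.zero_le n)
    omega
  have hb2 : ∀ n, 2 ≤ b (n + 1) := by
    intro n
    have h1 := humono (Nat.lt_succ_self n)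
    rw [hb n] at h1
    have := hupos n
    nlinarith
  have hudvd : ∀ k n : ℕ, u k ∣ u (k + n) := by
    intro k n
    induction n with
    | zero => exact dvd_refl _
    | succ n ih =>
      rw [show k + (n + 1) = (k + n) + 1 from rfl, hb (k + n)]
      exact ih.trans (dvd_mul_left _ _)
  have hgrow : ∀ n m : ℕ, 2 ^ m * u n ≤ u (n + m) := by
    intro n m
    induction m with
    | zero => simp
    | succ m ih =>
      rw [show n + (m + 1) = (n + m) + 1 from rfl, hb (n + m)]
      have := hb2 (n + m)
      calc 2 ^ (m + 1) * u n = 2 * (2 ^ m * u n) := by ring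
        _ ≤ 2 * u (n + m) := by omega
        _ ≤ b (n + m + 1) * u (n + m) := by
            exact Nat.mul_le_mul_right _ this
  set f : ℕ → ℝ := fun n => (c (n + 1) : ℝ) / (u (n + 1) : ℝ) with hf
  have hf0 : ∀ n, 0 ≤ f n := fun n => div_nonneg (Nat.cast_nonneg _) (Nat.cast_nonneg _)
  have hfle : ∀ n, f n ≤ 1 / (u n : ℝ) - 1 / (u (n + 1) : ℝ) := by
    intro n
    have hcb : (c (n + 1) : ℝ) + 1 ≤ (b (n + 1) : ℝ) := by exact_mod_cast hclt n
    have hun : (0 : ℝ) < (u n : ℝ) := by exact_mod_cast hupos n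
    have hbn : (0 : ℝ) < (b (n + 1) : ℝ) := by
      have := hb2 n; positivity
    have hun1 : ((u (n + 1) : ℕ) : ℝ) = (b (n + 1) : ℝ) * (u n : ℝ) := by
      rw [hb n]; push_cast; ring
    have h1 : f n ≤ ((b (n + 1) : ℝ) - 1) / (u (n + 1) : ℝ) := by
      have hun1' : (0 : ℝ) < (u (n + 1) : ℝ) := by exact_mod_cast hupos (n + 1)
      show (c (n + 1) : ℝ) / (u (n + 1) : ℝ) ≤ _
      gcongr
      linarith
    calc f n ≤ ((b (n + 1) : ℝ) - 1) / (u (n + 1) : ℝ) := h1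
      _ = 1 / (u n : ℝ) - 1 / (u (n + 1) : ℝ) := by
          rw [hun1]; field_simp
  have hfle' : ∀ n, f n ≤ (1 / 2 : ℝ) ^ n := by
    intro n
    have h2 : (2 : ℝ) ^ n ≤ (u n : ℝ) := by
      have := hgrow 0 n
      rw [hu0] at this
      simp only [mul_one, Nat.zero_add] at this
      exact_mod_cast this
    have hun1 : (0 : ℝ) < (u (n + 1) : ℝ) := by exact_mod_cast hupos (n + 1)
    have h3 : 1 / (u n : ℝ) ≤ (1 / 2 : ℝ) ^ n := by
      rw [one_div_pow]
      exact one_div_le_one_div_of_le (by positivity) h2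
    have := hfle n
    have : f n ≤ 1 / (u n : ℝ) := by
      have h4 : 0 ≤ 1 / (u (n + 1) : ℝ) := by positivity
      linarith
    linarith
  have hfsum : Summable f :=
    Summable.of_nonneg_of_le hf0 hfle' (summable_geometric_of_lt_one (by norm_num) (by norm_num))
  have htail : ∀ N : ℕ, (∑' k, f (k + N)) ≤ 1 / (u N : ℝ) := by
    intro N
    apply Summable.tsum_le_of_sum_range_le ((summable_nat_add_iff N).2 hfsum)
    intro M
    have key : ∀ i : ℕ, f (i + N) ≤ 1 / (u (i + N) : ℝ) - 1 / (u ((i + 1) + N) : ℝ) := by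
      intro i
      have := hfle (i + N)
      have he : (i + N) + 1 = (i + 1) + N := by omega
      rw [he] at this
      exact this
    calc ∑ i ∈ Finset.range M, f (i + N)
        ≤ ∑ i ∈ Finset.range M, (1 / (u (i + N) : ℝ) - 1 / (u ((i + 1) + N) : ℝ)) :=
          Finset.sum_le_sum fun i _ => key i
      _ = 1 / (u (0 + N) : ℝ) - 1 / (u (M + N) : ℝ) :=
          Finset.sum_range_sub' (fun i => 1 / (u (i + N) : ℝ)) M
      _ ≤ 1 / (u N : ℝ) := by
          have : (0 : ℝ) ≤ 1 / (u (M + N) : ℝ) := by positivity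
          simp only [Nat.zero_add]
          linarith
  have hint : ∀ N : ℕ, ∃ A : ℤ, (u N : ℝ) * (∑ k ∈ Finset.range N, f k) = (A : ℝ) := by
    intro N
    refine ⟨∑ k ∈ Finset.range N, (c (k + 1) : ℤ) * ((u N / u (k + 1) : ℕ) : ℤ), ?_⟩
    rw [Finset.mul_sum, Int.cast_sum]
    apply Finset.sum_congr rfl
    intro k hk
    have hkN : k + 1 ≤ N := Finset.mem_range.1 hk
    have hdvd : u (k + 1) ∣ u N := by
      have := hudvd (k + 1) (N - (k + 1))
      rwa [show (k + 1) + (N - (k + 1)) = N by omega] at this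
    have hpos : ((u (k + 1) : ℕ) : ℝ) ≠ 0 := by
      exact_mod_cast (hupos (k + 1)).ne'
    rw [Int.cast_mul, Int.cast_natCast, Int.cast_natCast, Nat.cast_div hdvd hpos]
    simp only [hf]
    field_simp
  -- main argument
  intro ε hε
  obtain ⟨m, hm⟩ : ∃ m : ℕ, (1 / 2 : ℝ) ^ m < ε := exists_pow_lt_of_lt_one hε (by norm_num)
  set Bad : ℕ → Set ℕ := fun j => {n | c (n + 1 + j) ≠ 0} with hBadDef
  have hBad : ∀ j, Bad j ∈ I := by
    intro j
    apply hsubset _ _ _ (hSti (-(1 + j)))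
    intro n hn
    exact ⟨n + 1 + j, hn, by push_cast; ring⟩
  have hFin : ∀ s : Finset ℕ, (⋃ j ∈ s, Bad j) ∈ I := by
    intro s
    induction s using Finset.induction_on with
    | empty => simpa using hfree ∅ Set.finite_empty
    | insert a s h ih =>
      rw [Finset.set_biUnion_insert]
      exact hunion _ _ (hBad _) ih
  apply hsubset _ _ _ (hFin (Finset.range (m + 1)))
  intro n hn
  simp only [Set.mem_setOf_eq] at hn
  by_contra hnot
  have hzero : ∀ j, j < m + 1 → c (n + 1 + j) = 0 := by
    intro j hj
    by_contra hc
    apply hnot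
    simp only [Set.mem_iUnion]
    exact ⟨j, Finset.mem_range.mpr hj, hc⟩
  -- split x at index n
  have hsplit : (∑ k ∈ Finset.range n, f k) + (∑' k, f (k + n)) = ∑' k, f k :=
    Summable.sum_add_tsum_nat_add n hfsum
  have hgsum : Summable fun k => f (k + n) := (summable_nat_add_iff n).2 hfsum
  have hsplit2 : (∑ k ∈ Finset.range (m + 1), f (k + n)) + (∑' k, f ((k + (m + 1)) + n))
      = ∑' k, f (k + n) := Summable.sum_add_tsum_nat_add (m + 1) hgsum
  have hzsum : (∑ k ∈ Finset.range (m + 1), f (k + n)) = 0 := by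
    apply Finset.sum_eq_zero
    intro k hk
    have hk' : k < m + 1 := Finset.mem_range.1 hk
    have : c ((k + n) + 1) = 0 := by
      have := hzero k hk'
      rwa [show n + 1 + k = (k + n) + 1 by omega] at this
    simp [hf, this]
  have hT : (∑' k, f (k + n)) = ∑' k, f (k + ((m + 1) + n)) := by
    rw [← hsplit2, hzsum, zero_add]
    congr 1
    funext k
    congr 1
    omega
  have hTle : (∑' k, f (k + n)) ≤ 1 / (u ((m + 1) + n) : ℝ) := by
    rw [hT]; exact htail ((m + 1) + n)
  have hTnn : 0 ≤ ∑' k, f (k + n) := tsum_nonneg fun k => hf0 _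
  obtain ⟨A, hA⟩ := hint n
  have hux : (u n : ℝ) * x = (A : ℝ) + (u n : ℝ) * (∑' k, f (k + n)) := by
    rw [hsum, ← hsplit, mul_add, hA]
  have hbound : (u n : ℝ) * (∑' k, f (k + n)) < ε := by
    have hupos' : (0 : ℝ) < (u n : ℝ) := by exact_mod_cast hupos n
    have hupos2 : (0 : ℝ) < (u ((m + 1) + n) : ℝ) := by exact_mod_cast hupos ((m + 1) + n)
    have hgr : (2 : ℝ) ^ (m + 1) * (u n : ℝ) ≤ (u ((m + 1) + n) : ℝ) := by
      have := hgrow n (m + 1)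
      rw [show n + (m + 1) = (m + 1) + n by omega] at this
      exact_mod_cast this
    have h1 : (u n : ℝ) * (∑' k, f (k + n)) ≤ (u n : ℝ) / (u ((m + 1) + n) : ℝ) := by
      rw [div_eq_mul_inv, ← one_div]
      exact mul_le_mul_of_nonneg_left hTle hupos'.le
    have h2 : (u n : ℝ) / (u ((m + 1) + n) : ℝ) ≤ (1 / 2 : ℝ) ^ (m + 1) := by
      rw [div_le_iff₀ hupos2, div_pow, one_pow, div_mul_eq_mul_div, le_div_iff₀ (by positivity)]
      nlinarith
    have h3 : ((1 : ℝ) / 2) ^ (m + 1) ≤ (1 / 2 : ℝ) ^ m := by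
      apply pow_le_pow_of_le_one (by norm_num) (by norm_num)
      omega
    linarith
  have habs : |(u n : ℝ) * x - (round ((u n : ℝ) * x) : ℝ)| < ε := by
    have h4 := round_le ((u n : ℝ) * x) A
    have h5 : |(u n : ℝ) * x - (A : ℝ)| < ε := by
      rw [hux]
      rw [add_sub_cancel_left, abs_of_nonneg (by positivity)]
      exact hbound
    calc |(u n : ℝ) * x - (round ((u n : ℝ) * x) : ℝ)| ≤ |(u n : ℝ) * x - (A : ℝ)| := h4
      _ < ε := h5
  linarith
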